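/- Speculation is strictly more profitable in second-price auctions than in first-price auctions: the functions Π* and Π⋆ are continuous on [0,r], both attain their maxima there, and max_{v ∈ [0,r]} Π*(v) > max_{v ∈ [0,r]} Π⋆(v). -/

import Mathlib

open MeasureTheory Set

/-- Second-price acquisition price: `p*(v) = v + ∫_v^r (1−F x)^(N−1) dx`. -/
noncomputable def pstar (F : ℝ → ℝ) (N : ℕ) (r : ℝ) (v : ℝ) : ℝ :=
  v + ∫ x in v..r, (1 - F x) ^ (N - 1)

/-- Speculator's expected payment from a second-price subgame against `m` sellers. -/
noncomputable def y (F : ℝ → ℝ) (r : ℝ) (m : ℕ) (v : ℝ) : ℝ :=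
  v + ∫ x in v..r, ((1 - F x) / (1 - F v)) ^ m

/-- Speculator's expected profit in the second-price speculation game at cutoff `v`. -/
noncomputable def PiSPA (F : ℝ → ℝ) (N : ℕ) (r : ℝ) (v : ℝ) : ℝ :=
  (∑ m ∈ Finset.range N,
      (N.choose m : ℝ) * (F v) ^ (N - m) * (1 - F v) ^ m * y F r m v)
    - N * F v * pstar F N r v

/-- Truncated conditional CDF `G(x; v) = (F x − F v)/(1 − F v)`. -/
noncomputable def G (F : ℝ → ℝ) (v x : ℝ) : ℝ := (F x - F v) / (1 - F v)

/-- `ubar_b(m, v) = max_{b ∈ [v, r]} b (1 − G(b; v))^m`. -/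
noncomputable def ubarb (F : ℝ → ℝ) (r : ℝ) (m : ℕ) (v : ℝ) : ℝ :=
  sSup ((fun b => b * (1 - G F v b) ^ m) '' Icc v r)

/-- First-price acquisition price `p⋆(v)`. -/
noncomputable def pFPA (F : ℝ → ℝ) (N : ℕ) (r : ℝ) (v : ℝ) : ℝ :=
  v + (∫ x in v..r, (1 - F x) ^ (N - 1)) +
    ∑ m ∈ Finset.range (N - 1),
      ((N - 1).choose m : ℝ) * (1 - F v) ^ m * (F v) ^ (N - 1 - m) *
        (ubarb F r (m + 1) v - v)

/-- Speculator's expected profit in the first-price speculation game at cutoff `v`. -/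
noncomputable def PiFPA (F : ℝ → ℝ) (N : ℕ) (r : ℝ) (v : ℝ) : ℝ :=
  (∑ m ∈ Finset.Icc 1 (N - 1),
      (N.choose m : ℝ) * (1 - F v) ^ m * (F v) ^ (N - m) * ubarb F r m v)
    + (F v) ^ N * r - N * F v * pFPA F N r v

lemma bern_strict {t : ℝ} (ht : 0 < t) (ht1 : t ≤ 1) : ∀ N : ℕ, 2 ≤ N → 1 - N * t < (1 - t) ^ N := by
  intro N hN
  induction N with
  | zero => omega
  | succ n ih =>
    rcases Nat.lt_or_ge n 2 with hn | hn
    · interval_cases n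
      · omega
      · have : (1 - t)^2 = 1 - 2*t + t^2 := by ring
        rw [this]; push_cast; nlinarith [sq_nonneg t]
    · have h := ih hn
      rcases eq_or_lt_of_le ht1 with h1 | h1
      · have : (1 - t)^(n+1) = 0 := by rw [← h1]; simp
        have hn' : (2:ℝ) ≤ n := by exact_mod_cast hn
        rw [this]; push_cast; nlinarith
      · have h2 : (0:ℝ) < 1 - t := by linarith
        have h3 := mul_lt_mul_of_pos_left h h2
        have h4 : (1 - t) * (1 - t)^n = (1-t)^(n+1) := by ring
        have hn' : (0:ℝ) ≤ n := by positivity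
        push_cast
        nlinarith [mul_nonneg hn' (sq_nonneg t)]
lemma pow_one_sub_le {a : ℝ} (ha : 0 ≤ a) (ha1 : a ≤ 1) (N : ℕ) :
    (1 - a) ^ N ≤ 1 - N * a + (N.choose 2 : ℝ) * a ^ 2 := by
  induction N with
  | zero => simp
  | succ n ih =>
    have h1 : (0:ℝ) ≤ 1 - a := by linarith
    have h2 : (1 - a) ^ (n+1) = (1 - a) * (1 - a)^n := by ring
    have h3 : (1 - a) * (1 - a)^n ≤ (1 - a) * (1 - n*a + (n.choose 2 : ℝ) * a^2) :=
      mul_le_mul_of_nonneg_left ih h1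
    have h4 : ((n+1).choose 2 : ℝ) = (n.choose 2 : ℝ) + n := by
      rw [Nat.choose_succ_succ n 1]
      push_cast [Nat.choose_one_right]; ring
    have h5 : (0:ℝ) ≤ (n.choose 2 : ℝ) := by positivity
    rw [h2]
    push_cast [h4]
    nlinarith [mul_nonneg h5 (pow_nonneg ha 3)]

lemma sSup_image_Icc_contOn {ψ : ℝ → ℝ} {r : ℝ} (hr : 0 ≤ r) (hψ : ContinuousOn ψ (Icc 0 r)) :
    ContinuousOn (fun v => sSup (ψ '' Icc v r)) (Icc 0 r) := by
  have maxpt : ∀ u ∈ Icc (0:ℝ) r, ∃ b ∈ Icc u r, IsGreatest (ψ '' Icc u r) (ψ b) := by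
    intro u hu
    have hsub : Icc u r ⊆ Icc 0 r := Icc_subset_Icc hu.1 le_rfl
    obtain ⟨b, hb, hmax⟩ := isCompact_Icc.exists_isMaxOn (nonempty_Icc.2 hu.2) (hψ.mono hsub)
    exact ⟨b, hb, ⟨mem_image_of_mem _ hb, by rintro _ ⟨x, hx, rfl⟩; exact hmax hx⟩⟩
  set T : ℝ → ℝ := fun v => sSup (ψ '' Icc v r) with hT
  have hTg : ∀ u ∈ Icc (0:ℝ) r, ∃ b ∈ Icc u r, T u = ψ b ∧ IsGreatest (ψ '' Icc u r) (ψ b) := by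
    intro u hu
    obtain ⟨b, hb, hg⟩ := maxpt u hu
    exact ⟨b, hb, hg.csSup_eq.symm ▸ rfl, hg⟩
  have hmono : ∀ u w : ℝ, u ∈ Icc (0:ℝ) r → u ≤ w → w ≤ r → T w ≤ T u := by
    intro u w hu huw hwr
    obtain ⟨b, hb, hTu, hg⟩ := hTg u hu
    refine csSup_le_csSup hg.bddAbove (nonempty_Icc.2 hwr |>.image _) ?_
    exact image_mono (Icc_subset_Icc huw le_rfl)
  intro v₀ hv₀
  rw [Metric.continuousWithinAt_iff]
  intro ε hε
  have hUC := isCompact_Icc.uniformContinuousOn_of_continuous hψ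
  rw [Metric.uniformContinuousOn_iff] at hUC
  obtain ⟨δ, hδ, H⟩ := hUC ε hε
  have key : ∀ u w : ℝ, u ∈ Icc (0:ℝ) r → w ∈ Icc (0:ℝ) r → u ≤ w → w - u < δ → T u < T w + ε := by
    intro u w hu hw huw hd
    obtain ⟨b₀, hb₀, hTu, hg⟩ := hTg u hu
    obtain ⟨b₁, hb₁, hTw, hg'⟩ := hTg w hw
    rcases le_or_gt w b₀ with hb | hb
    · have : ψ b₀ ≤ T w := le_csSup hg'.bddAbove (mem_image_of_mem _ ⟨hb, hb₀.2⟩)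
      rw [hTu]; linarith
    · have hb0mem : b₀ ∈ Icc (0:ℝ) r := ⟨le_trans hu.1 hb₀.1, hb₀.2⟩
      have hdist : dist b₀ w < δ := by
        rw [Real.dist_eq, abs_of_nonpos (by linarith)]
        have := hb₀.1
        linarith
      have h1 := H b₀ hb0mem w hw hdist
      rw [Real.dist_eq] at h1
      have h2 : ψ b₀ - ψ w < ε := lt_of_abs_lt h1
      have h3 : ψ w ≤ T w := le_csSup hg'.bddAbove (mem_image_of_mem _ ⟨le_rfl, hw.2⟩)
      rw [hTu]; linarith
  refine ⟨δ, hδ, ?_⟩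
  intro x hx hdx
  rw [Real.dist_eq] at hdx ⊢
  rw [abs_sub_lt_iff]
  rcases le_total x v₀ with hc | hc
  · have h1 := hmono x v₀ hx hc hv₀.2
    have h2 := key x v₀ hx hv₀ hc (by rw [abs_sub_lt_iff] at hdx; linarith [hdx.2])
    constructor <;> linarith
  · have h1 := hmono v₀ x hv₀ hc hx.2
    have h2 := key v₀ x hv₀ hx hc (by rw [abs_sub_lt_iff] at hdx; linarith [hdx.1])
    constructor <;> linarith

section Aux
variable {F : ℝ → ℝ} {r : ℝ}
  (hFc : ContinuousOn F (Icc 0 1)) (hFm : StrictMonoOn F (Icc 0 1))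
  (hF0 : F 0 = 0) (hF1 : F 1 = 1) (hr0 : 0 < r) (hr1 : r ≤ 1)

include hFm hF0 in
lemma F_nonneg {v : ℝ} (hv : v ∈ Icc (0:ℝ) 1) : 0 ≤ F v := by
  rw [← hF0]
  exact hFm.monotoneOn (left_mem_Icc.2 zero_le_one) hv hv.1

include hFm hF1 in
lemma F_le_one {v : ℝ} (hv : v ∈ Icc (0:ℝ) 1) : F v ≤ 1 := by
  rw [← hF1]
  exact hFm.monotoneOn hv (right_mem_Icc.2 zero_le_one) hv.2

include hFm hF1 in
lemma F_lt_one {v : ℝ} (hv : v ∈ Icc (0:ℝ) 1) (hv1 : v < 1) : F v < 1 := by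
  rw [← hF1]
  exact hFm hv (right_mem_Icc.2 zero_le_one) hv1

include hFm hF0 in
lemma F_pos {v : ℝ} (hv : v ∈ Icc (0:ℝ) 1) (hv0 : 0 < v) : 0 < F v := by
  rw [← hF0]
  exact hFm (left_mem_Icc.2 zero_le_one) hv hv0

include hr1 in
lemma Icc_sub {v : ℝ} (hv : v ∈ Icc (0:ℝ) r) : Icc v r ⊆ Icc (0:ℝ) 1 :=
  Icc_subset_Icc hv.1 hr1

include hr1 in
lemma mem01 {v : ℝ} (hv : v ∈ Icc (0:ℝ) r) : v ∈ Icc (0:ℝ) 1 :=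
  ⟨hv.1, hv.2.trans hr1⟩

include hFc hr1 in
lemma hInt (m : ℕ) {a b : ℝ} (ha : a ∈ Icc (0:ℝ) r) (hb : b ∈ Icc (0:ℝ) r) :
    IntervalIntegrable (fun x => (1 - F x) ^ m) volume a b := by
  apply ContinuousOn.intervalIntegrable
  exact (continuousOn_const.sub (hFc.mono (uIcc_subset_Icc (mem01 hr1 ha) (mem01 hr1 hb)))).pow m

include hFc hr0 hr1 in
lemma phi_cont (m : ℕ) : ContinuousOn (fun v => ∫ x in v..r, (1 - F x) ^ m) (Icc 0 r) := by
  have h : IntegrableOn (fun x => (1 - F x) ^ m) (uIcc 0 r) volume := by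
    rw [uIcc_of_le hr0.le]
    exact ((continuousOn_const.sub (hFc.mono (Icc_subset_Icc le_rfl hr1))).pow m).integrableOn_Icc
  have := intervalIntegral.continuousOn_primitive_interval_left h
  rwa [uIcc_of_le hr0.le] at this

include hFm hF1 hr1 in
lemma phi_nonneg (m : ℕ) {v : ℝ} (hv : v ∈ Icc (0:ℝ) r) :
    0 ≤ ∫ x in v..r, (1 - F x) ^ m := by
  apply intervalIntegral.integral_nonneg hv.2
  intro x hx
  have h1 : F x ≤ 1 := F_le_one hFm hF1 (Icc_sub hr1 hv hx)
  have : (0:ℝ) ≤ 1 - F x := by linarith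
  positivity

include hFm hF1 hr1 in
lemma hmul_y (m : ℕ) {v : ℝ} (hv : v ∈ Icc (0:ℝ) r) :
    (1 - F v) ^ m * y F r m v = (1 - F v) ^ m * v + ∫ x in v..r, (1 - F x) ^ m := by
  by_cases h1 : F v = 1
  · have hv1 : v = 1 := by
      by_contra hne
      have hlt : v < 1 := lt_of_le_of_ne (hv.2.trans hr1) hne
      exact absurd h1 (ne_of_lt (F_lt_one hFm hF1 (mem01 hr1 hv) hlt))
    have hre : r = 1 := le_antisymm hr1 (hv1 ▸ hv.2)
    subst hv1
    subst hre
    simp [y, intervalIntegral.integral_same, h1]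
  · have hne : (1:ℝ) - F v ≠ 0 := sub_ne_zero.2 (Ne.symm h1)
    simp only [y, mul_add]
    congr 1
    rw [← intervalIntegral.integral_const_mul]
    apply intervalIntegral.integral_congr
    intro x _
    simp only []
    rw [div_pow, mul_div_cancel₀]
    exact pow_ne_zero _ hne

lemma one_sub_G {v b : ℝ} (hne : (1:ℝ) - F v ≠ 0) :
    1 - G F v b = (1 - F b) / (1 - F v) := by
  rw [G, eq_div_iff hne, sub_mul, one_mul, div_mul_cancel₀ _ hne]
  ring

include hFm hF1 hr1 in
lemma elt_le_r (m : ℕ) {v : ℝ} (hv : v ∈ Icc (0:ℝ) r) :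
    ∀ b ∈ Icc v r, b * (1 - G F v b) ^ m ≤ r := by
  intro b hb
  by_cases h1 : F v = 1
  · have hv1 : v = 1 := by
      by_contra hne
      exact absurd h1 (ne_of_lt (F_lt_one hFm hF1 (mem01 hr1 hv)
        (lt_of_le_of_ne (hv.2.trans hr1) hne)))
    have hre : r = 1 := le_antisymm hr1 (hv1 ▸ hv.2)
    have hb1 : b = 1 := le_antisymm (hb.2.trans hr1) (hv1 ▸ hb.1)
    subst hv1; subst hb1
    simp [G, hre]
  · have hc : (0:ℝ) < 1 - F v :=
      lt_of_le_of_ne (by linarith [F_le_one hFm hF1 (mem01 hr1 hv)]) (Ne.symm (sub_ne_zero.2 (Ne.symm h1)))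
    have hGb : 1 - G F v b = (1 - F b) / (1 - F v) := one_sub_G hc.ne'
    have hbm : b ∈ Icc (0:ℝ) 1 := Icc_sub hr1 hv hb
    have h2 : F v ≤ F b := hFm.monotoneOn (mem01 hr1 hv) hbm hb.1
    have h3 : F b ≤ 1 := F_le_one hFm hF1 hbm
    have h4 : (0:ℝ) ≤ (1 - F b)/(1 - F v) := div_nonneg (by linarith) hc.le
    have h5 : (1 - F b)/(1 - F v) ≤ 1 := by
      rw [div_le_one hc]; linarith
    calc b * (1 - G F v b)^m ≤ b * 1 := by
          rw [hGb]
          refine mul_le_mul_of_nonneg_left ?_ (le_trans hv.1 hb.1)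
          exact pow_le_one₀ h4 h5
      _ = b := mul_one b
      _ ≤ r := hb.2

include hFm hF1 hr1 in
lemma ubarb_bdd (m : ℕ) {v : ℝ} (hv : v ∈ Icc (0:ℝ) r) :
    BddAbove ((fun b => b * (1 - G F v b) ^ m) '' Icc v r) := by
  refine ⟨r, ?_⟩
  rintro _ ⟨b, hb, rfl⟩
  exact elt_le_r hFm hF1 hr1 m hv b hb

lemma G_self (v : ℝ) : G F v v = 0 := by simp [G]

include hFm hF1 hr1 in
lemma le_ubarb (m : ℕ) {v : ℝ} (hv : v ∈ Icc (0:ℝ) r) : v ≤ ubarb F r m v := by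
  have hmem : v ∈ (fun b => b * (1 - G F v b) ^ m) '' Icc v r := by
    refine ⟨v, left_mem_Icc.2 hv.2, ?_⟩
    simp [G_self]
  exact le_csSup (ubarb_bdd hFm hF1 hr1 m hv) hmem

include hFm hF1 hr0 hr1 in
lemma ubarb_le_r (m : ℕ) {v : ℝ} (hv : v ∈ Icc (0:ℝ) r) : ubarb F r m v ≤ r :=
  Real.sSup_le (by rintro _ ⟨b, hb, rfl⟩; exact elt_le_r hFm hF1 hr1 m hv b hb) hr0.le

lemma ubarb_r (m : ℕ) : ubarb F r m r = r := by
  rw [ubarb, Icc_self, image_singleton, csSup_singleton, G_self]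
  simp

include hFc hFm hF1 hr1 in
lemma ubarb_max (m : ℕ) {v : ℝ} (hv : v ∈ Icc (0:ℝ) r) (h1 : F v < 1) :
    ∃ b₀ ∈ Icc v r,
      (∀ b ∈ Icc v r, b * (1 - F b) ^ m ≤ b₀ * (1 - F b₀) ^ m) ∧
      ubarb F r m v = b₀ * (1 - F b₀) ^ m / (1 - F v) ^ m ∧
      sSup ((fun b => b * (1 - F b) ^ m) '' Icc v r) = b₀ * (1 - F b₀) ^ m := by
  have hc : (0:ℝ) < 1 - F v := by linarith
  have hcont : ContinuousOn (fun b => b * (1 - F b) ^ m) (Icc v r) :=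
    continuousOn_id.mul ((continuousOn_const.sub (hFc.mono (Icc_sub hr1 hv))).pow m)
  obtain ⟨b₀, hb₀, hmax⟩ := isCompact_Icc.exists_isMaxOn (nonempty_Icc.2 hv.2) hcont
  have hmax' : ∀ b ∈ Icc v r, b * (1 - F b) ^ m ≤ b₀ * (1 - F b₀) ^ m := fun b hb => hmax hb
  refine ⟨b₀, hb₀, hmax', ?_, ?_⟩
  · have himg : ∀ b, (fun b => b * (1 - G F v b) ^ m) b = b * (1 - F b) ^ m / (1 - F v) ^ m := by
      intro b
      show b * (1 - G F v b) ^ m = _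
      rw [one_sub_G hc.ne', div_pow, mul_div_assoc]
    have hgr : IsGreatest ((fun b => b * (1 - G F v b) ^ m) '' Icc v r)
        (b₀ * (1 - F b₀) ^ m / (1 - F v) ^ m) := by
      constructor
      · exact ⟨b₀, hb₀, himg b₀⟩
      · rintro _ ⟨b, hb, rfl⟩
        rw [himg b]
        exact div_le_div_of_nonneg_right (hmax' b hb) (by positivity)
    exact hgr.csSup_eq
  · have hgr : IsGreatest ((fun b => b * (1 - F b) ^ m) '' Icc v r) (b₀ * (1 - F b₀) ^ m) :=
      ⟨mem_image_of_mem _ hb₀, by rintro _ ⟨b, hb, rfl⟩; exact hmax' b hb⟩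
    exact hgr.csSup_eq


include hFc hFm hF1 hr1 in
lemma hmul_ubarb (m : ℕ) {v : ℝ} (hv : v ∈ Icc (0:ℝ) r) :
    (1 - F v) ^ m * ubarb F r m v
      = sSup ((fun b => b * (1 - F b) ^ m) '' Icc v r) := by
  by_cases h1 : F v = 1
  · have hv1 : v = 1 := by
      by_contra hne
      exact absurd h1 (ne_of_lt (F_lt_one hFm hF1 (mem01 hr1 hv)
        (lt_of_le_of_ne (hv.2.trans hr1) hne)))
    have hre : r = 1 := le_antisymm hr1 (hv1 ▸ hv.2)
    subst hv1
    rw [← hre, ubarb_r, Icc_self, image_singleton, csSup_singleton, hre, h1]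
    ring
  · have hlt : F v < 1 := lt_of_le_of_ne (F_le_one hFm hF1 (mem01 hr1 hv)) h1
    obtain ⟨b₀, hb₀, hmax, hub, hS⟩ := ubarb_max hFc hFm hF1 hr1 m hv hlt
    rw [hub, hS, mul_div_cancel₀]
    exact pow_ne_zero _ (by linarith : (1:ℝ) - F v ≠ 0)

include hFc hr0 hr1 in
lemma S_cont (m : ℕ) :
    ContinuousOn (fun v => sSup ((fun b => b * (1 - F b) ^ m) '' Icc v r)) (Icc 0 r) := by
  apply sSup_image_Icc_contOn hr0.le
  exact continuousOn_id.mul ((continuousOn_const.sub (hFc.mono (Icc_subset_Icc le_rfl hr1))).pow m)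

include hFc hFm hF1 hr0 hr1 in
lemma ubarb_cont (m : ℕ) : ContinuousOn (fun v => ubarb F r m v) (Icc 0 r) := by
  intro v hv
  by_cases hv1 : v < 1
  · have hFr : ContinuousOn F (Icc 0 r) := hFc.mono (Icc_subset_Icc le_rfl hr1)
    have hne : ((1:ℝ) - F v) ^ m ≠ 0 :=
      pow_ne_zero _ (by linarith [F_lt_one hFm hF1 (mem01 hr1 hv) hv1] : (1:ℝ) - F v ≠ 0)
    have hg : ContinuousWithinAt
        (fun w => sSup ((fun b => b * (1 - F b) ^ m) '' Icc w r) / (1 - F w) ^ m)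
        (Icc 0 r) v := by
      apply ContinuousWithinAt.div
      · exact (S_cont hFc hr0 hr1 m).continuousWithinAt hv
      · exact (((continuousOn_const.sub hFr).pow m).continuousWithinAt hv)
      · exact hne
    have h2 : ∀ᶠ w in nhdsWithin v (Icc 0 r), w < 1 :=
      ((isOpen_Iio.eventually_mem (show v ∈ Iio (1:ℝ) from hv1)).filter_mono nhdsWithin_le_nhds)
    have hev : (fun w => ubarb F r m w)
        =ᶠ[nhdsWithin v (Icc 0 r)]
        (fun w => sSup ((fun b => b * (1 - F b) ^ m) '' Icc w r) / (1 - F w) ^ m) := by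
      filter_upwards [self_mem_nhdsWithin, h2] with w hw hw1
      have hnew : ((1:ℝ) - F w) ^ m ≠ 0 :=
        pow_ne_zero _ (by linarith [F_lt_one hFm hF1 (mem01 hr1 hw) hw1] : (1:ℝ) - F w ≠ 0)
      rw [eq_div_iff hnew, mul_comm]
      exact hmul_ubarb hFc hFm hF1 hr1 m hw
    exact hg.congr_of_eventuallyEq hev (by
      rw [eq_div_iff hne, mul_comm]
      exact hmul_ubarb hFc hFm hF1 hr1 m hv)
  · have hveq : v = 1 := le_antisymm (hv.2.trans hr1) (not_lt.1 hv1)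
    have hre : r = 1 := le_antisymm hr1 (hveq ▸ hv.2)
    subst hre
    subst hveq
    have hval : ubarb F 1 m 1 = 1 := ubarb_r m
    rw [ContinuousWithinAt, hval]
    have hlow : Filter.Tendsto (fun w : ℝ => w) (nhdsWithin 1 (Icc 0 1)) (nhds 1) :=
      Filter.Tendsto.mono_left Filter.tendsto_id nhdsWithin_le_nhds
    have hup : Filter.Tendsto (fun _ : ℝ => (1:ℝ)) (nhdsWithin 1 (Icc 0 1)) (nhds 1) :=
      tendsto_const_nhds
    apply tendsto_of_tendsto_of_tendsto_of_le_of_le' hlow hup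
    · filter_upwards [self_mem_nhdsWithin] with w hw
      exact le_ubarb hFm hF1 hr1 m hw
    · filter_upwards [self_mem_nhdsWithin] with w hw
      exact ubarb_le_r hFm hF1 hr0 hr1 m hw


include hFc hFm hF1 hr0 hr1 in
lemma ubarb_lt_y (m : ℕ) (hm : 1 ≤ m) {v : ℝ} (hv0 : 0 < v) (hvr : v < r) :
    ubarb F r m v < y F r m v := by
  have hv : v ∈ Icc (0:ℝ) r := ⟨hv0.le, hvr.le⟩
  have hv01 : v ∈ Icc (0:ℝ) 1 := mem01 hr1 hv
  have hFv : F v < 1 := F_lt_one hFm hF1 hv01 (hvr.trans_le hr1)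
  have hc : (0:ℝ) < 1 - F v := by linarith
  have hIψ : ∀ {a b : ℝ}, a ∈ Icc (0:ℝ) r → b ∈ Icc (0:ℝ) r →
      IntervalIntegrable (fun x => ((1 - F x) / (1 - F v)) ^ m) volume a b := by
    intro a b ha hb
    simp only [div_pow]
    exact (hInt hFc hr1 m ha hb).div_const _
  have hψnn : ∀ x ∈ Icc (0:ℝ) 1, 0 ≤ ((1 - F x) / (1 - F v)) ^ m := by
    intro x hx
    have h' := F_le_one hFm hF1 hx
    exact pow_nonneg (div_nonneg (by linarith) hc.le) m
  obtain ⟨b₀, hb₀, hmax, hub, _⟩ := ubarb_max hFc hFm hF1 hr1 m hv hFv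
  rw [hub, y]
  have hb0r : b₀ ∈ Icc (0:ℝ) r := ⟨hv.1.trans hb₀.1, hb₀.2⟩
  rcases eq_or_lt_of_le hb₀.1 with heq | hlt
  · rw [← heq]
    have hval : v * (1 - F v) ^ m / (1 - F v) ^ m = v := by
      rw [mul_div_assoc, div_self (pow_ne_zero _ hc.ne'), mul_one]
    rw [hval]
    have hpos : 0 < ∫ x in v..r, ((1 - F x) / (1 - F v)) ^ m := by
      apply intervalIntegral.intervalIntegral_pos_of_pos_on (hIψ hv (right_mem_Icc.2 hr0.le))
      · intro x hx
        have hx1 : F x < 1 := F_lt_one hFm hF1 (Icc_sub hr1 hv ⟨hx.1.le, hx.2.le⟩)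
          (lt_of_lt_of_le hx.2 hr1)
        have : (0:ℝ) < 1 - F x := by linarith
        positivity
      · exact hvr
    linarith
  · have hb01 : b₀ ∈ Icc (0:ℝ) 1 := Icc_sub hr1 hv hb₀
    have hFb : F v < F b₀ := hFm hv01 hb01 hlt
    have hFb1 : F b₀ ≤ 1 := F_le_one hFm hF1 hb01
    set t : ℝ := ((1 - F b₀) / (1 - F v)) ^ m with ht
    have hLHS : b₀ * (1 - F b₀) ^ m / (1 - F v) ^ m = b₀ * t := by
      rw [ht, div_pow, mul_div_assoc]
    rw [hLHS]
    have h0le : (0:ℝ) ≤ (1 - F b₀) / (1 - F v) := div_nonneg (by linarith) hc.le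
    have htlt : t < 1 := by
      apply pow_lt_one₀ h0le _ (by omega)
      rw [div_lt_one hc]; linarith
    have htnn : 0 ≤ t := pow_nonneg h0le m
    have step2 : v * t < v := by nlinarith
    have step3 : (b₀ - v) * t ≤ ∫ x in v..b₀, ((1 - F x) / (1 - F v)) ^ m := by
      have hconst : ∫ _x in v..b₀, t = (b₀ - v) * t := by
        rw [intervalIntegral.integral_const, smul_eq_mul]
      rw [← hconst]
      apply intervalIntegral.integral_mono_on hlt.le intervalIntegrable_const (hIψ hv hb0r)
      intro x hx
      have hx01 : x ∈ Icc (0:ℝ) 1 := Icc_sub hr1 hv ⟨hx.1, hx.2.trans hb₀.2⟩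
      have hmono : F x ≤ F b₀ := hFm.monotoneOn hx01 hb01 hx.2
      apply pow_le_pow_left₀ h0le
      exact div_le_div_of_nonneg_right (by linarith : (1:ℝ) - F b₀ ≤ 1 - F x) hc.le
    have step4 : (∫ x in v..b₀, ((1 - F x) / (1 - F v)) ^ m)
        ≤ ∫ x in v..r, ((1 - F x) / (1 - F v)) ^ m := by
      have hadd := intervalIntegral.integral_add_adjacent_intervals
        (hIψ hv hb0r) (hIψ hb0r (right_mem_Icc.2 hr0.le))
      have hnn : 0 ≤ ∫ x in b₀..r, ((1 - F x) / (1 - F v)) ^ m := by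
        apply intervalIntegral.integral_nonneg hb₀.2
        intro u hu
        exact hψnn u (Icc_sub hr1 hv ⟨hb₀.1.trans hu.1, hu.2⟩)
      linarith
    nlinarith

end Aux

lemma binom_sum {a b : ℝ} (hab : a + b = 1) (N : ℕ) :
    ∑ m ∈ Finset.range N, (N.choose m : ℝ) * a ^ (N - m) * b ^ m = 1 - b ^ N := by
  have h := add_pow b a N
  rw [show b + a = 1 by linarith] at h
  rw [Finset.sum_range_succ, Nat.choose_self, Nat.sub_self] at h
  have h2 : ∑ m ∈ Finset.range N, (N.choose m : ℝ) * a ^ (N - m) * b ^ m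
      = ∑ k ∈ Finset.range N, b ^ k * a ^ (N - k) * (N.choose k : ℝ) :=
    Finset.sum_congr rfl (fun m _ => by ring)
  rw [h2]
  simp only [one_pow, pow_zero, Nat.cast_one, mul_one] at h
  linarith

lemma sum_split {M : ℕ} (hM : 1 ≤ M) (g : ℕ → ℝ) :
    ∑ m ∈ Finset.range M, g m = g 0 + ∑ m ∈ Finset.Icc 1 (M - 1), g m := by
  have h1 : M = (M - 1) + 1 := (Nat.succ_pred_eq_of_pos hM).symm
  conv_lhs => rw [h1, Finset.sum_range_succ']
  have h2 : Finset.Icc 1 (M - 1) = Finset.Ico 1 ((M - 1) + 1) := (Finset.Ico_add_one_right_eq_Icc 1 (M-1)).symm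
  rw [h2, Finset.sum_Ico_eq_sum_range]
  simp only [Nat.add_sub_cancel]
  rw [add_comm]
  congr 1
  exact Finset.sum_congr rfl (fun i _ => by rw [add_comm])

section Aux3
variable {F : ℝ → ℝ} {r : ℝ}
  (hFc : ContinuousOn F (Icc 0 1)) (hFm : StrictMonoOn F (Icc 0 1))
  (hF0 : F 0 = 0) (hF1 : F 1 = 1) (hr0 : 0 < r) (hr1 : r ≤ 1)

include hFm hF1 hr1 in
lemma PiSPA_closed (N : ℕ) {v : ℝ} (hv : v ∈ Icc (0:ℝ) r) :
    PiSPA F N r v = v * (1 - (1 - F v) ^ N) - N * F v * v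
      + (∑ m ∈ Finset.range N, (N.choose m : ℝ) * (F v) ^ (N - m) * ∫ x in v..r, (1 - F x) ^ m)
      - N * F v * (v - v + ∫ x in v..r, (1 - F x) ^ (N - 1)) := by
  rw [PiSPA, pstar]
  have hterm : ∀ m ∈ Finset.range N,
      (N.choose m : ℝ) * F v ^ (N - m) * (1 - F v) ^ m * y F r m v
      = (N.choose m : ℝ) * F v ^ (N - m) * (1 - F v) ^ m * v
        + (N.choose m : ℝ) * F v ^ (N - m) * ∫ x in v..r, (1 - F x) ^ m := by
    intro m _
    have hy := hmul_y hFm hF1 hr1 m hv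
    calc (N.choose m : ℝ) * F v ^ (N - m) * (1 - F v) ^ m * y F r m v
        = (N.choose m : ℝ) * F v ^ (N - m) * ((1 - F v) ^ m * y F r m v) := by ring
      _ = (N.choose m : ℝ) * F v ^ (N - m) * ((1 - F v) ^ m * v + ∫ x in v..r, (1 - F x) ^ m) := by
          rw [hy]
      _ = _ := by ring
  rw [Finset.sum_congr rfl hterm, Finset.sum_add_distrib]
  have h1 : ∑ m ∈ Finset.range N, (N.choose m : ℝ) * F v ^ (N - m) * (1 - F v) ^ m * v
      = v * (1 - (1 - F v) ^ N) := by
    have hb := binom_sum (a := F v) (b := 1 - F v) (by ring) N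
    have h3 : ∑ m ∈ Finset.range N, (N.choose m : ℝ) * F v ^ (N - m) * (1 - F v) ^ m * v
        = (∑ m ∈ Finset.range N, (N.choose m : ℝ) * F v ^ (N - m) * (1 - F v) ^ m) * v := by
      rw [Finset.sum_mul]
    rw [h3, hb]; ring
  rw [h1]; ring
end Aux3

section Aux4
variable {F : ℝ → ℝ} {r : ℝ}
  (hFc : ContinuousOn F (Icc 0 1)) (hFm : StrictMonoOn F (Icc 0 1))
  (hF0 : F 0 = 0) (hF1 : F 1 = 1) (hr0 : 0 < r) (hr1 : r ≤ 1)

lemma y_zero (v : ℝ) : y F r 0 v = r := by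
  simp [y, intervalIntegral.integral_const]

include hFc hFm hF0 hF1 hr0 hr1 in
lemma PiFPA_lt_PiSPA (N : ℕ) (hN : 2 ≤ N) {v : ℝ} (hv0 : 0 < v) (hvr : v < r) :
    PiFPA F N r v < PiSPA F N r v := by
  have hv : v ∈ Icc (0:ℝ) r := ⟨hv0.le, hvr.le⟩
  have hv01 : v ∈ Icc (0:ℝ) 1 := mem01 hr1 hv
  have ha0 : 0 < F v := F_pos hFm hF0 hv01 hv0
  have ha1 : F v < 1 := F_lt_one hFm hF1 hv01 (hvr.trans_le hr1)
  have hw0 : 0 < 1 - F v := by linarith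
  set SY := ∑ m ∈ Finset.Icc 1 (N-1),
    (N.choose m : ℝ) * (F v) ^ (N - m) * (1 - F v) ^ m * y F r m v with hSY
  set SU := ∑ m ∈ Finset.Icc 1 (N-1),
    (N.choose m : ℝ) * (1 - F v) ^ m * (F v) ^ (N - m) * ubarb F r m v with hSU
  set P := ∑ m ∈ Finset.range (N - 1),
    ((N - 1).choose m : ℝ) * (1 - F v) ^ m * (F v) ^ (N - 1 - m) *
      (ubarb F r (m + 1) v - v) with hP
  set I := ∫ x in v..r, (1 - F x) ^ (N - 1) with hI
  have e1 : PiSPA F N r v = (F v)^N * r + SY - N * F v * (v + I) := by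
    rw [PiSPA, pstar, sum_split (by omega : 1 ≤ N)
      (fun m => (N.choose m : ℝ) * (F v) ^ (N - m) * (1 - F v) ^ m * y F r m v)]
    rw [y_zero]
    simp only [Nat.choose_zero_right, Nat.cast_one, pow_zero, Nat.sub_zero]
    rw [← hSY, ← hI]
    ring
  have e2 : PiFPA F N r v = SU + (F v)^N * r - N * F v * (v + I + P) := by
    rw [PiFPA, pFPA, ← hSU, ← hI, ← hP]
    try ring
  have hdiff : PiSPA F N r v - PiFPA F N r v = (SY - SU) + N * F v * P := by
    rw [e1, e2]; ring
  have hA : SY - SU = ∑ m ∈ Finset.Icc 1 (N-1),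
      (N.choose m : ℝ) * (F v) ^ (N - m) * (1 - F v) ^ m * (y F r m v - ubarb F r m v) := by
    rw [hSY, hSU, ← Finset.sum_sub_distrib]
    exact Finset.sum_congr rfl (fun m _ => by ring)
  have hApos : 0 < SY - SU := by
    rw [hA]
    apply Finset.sum_pos
    · intro m hm
      obtain ⟨hm1, hm2⟩ := Finset.mem_Icc.1 hm
      have hy := ubarb_lt_y hFc hFm hF1 hr0 hr1 m hm1 hv0 hvr
      have hch : 0 < (N.choose m : ℝ) := by
        exact_mod_cast Nat.choose_pos (by omega : m ≤ N)
      have h1 : 0 < (F v) ^ (N - m) := pow_pos ha0 _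
      have h2 : 0 < (1 - F v) ^ m := pow_pos hw0 _
      have h3 : 0 < y F r m v - ubarb F r m v := by linarith
      positivity
    · exact Finset.nonempty_Icc.2 (by omega)
  have hPnn : 0 ≤ P := by
    rw [hP]
    apply Finset.sum_nonneg
    intro m _
    have h1 : v ≤ ubarb F r (m+1) v := le_ubarb hFm hF1 hr1 (m+1) hv
    have h2 : (0:ℝ) ≤ ((N-1).choose m : ℝ) := by positivity
    have h3 : (0:ℝ) ≤ (1 - F v)^m := by positivity
    have h4 : (0:ℝ) ≤ (F v)^(N-1-m) := by positivity
    have h5 : (0:ℝ) ≤ ubarb F r (m+1) v - v := by linarith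
    positivity
  nlinarith [mul_nonneg (mul_nonneg (by positivity : (0:ℝ) ≤ (N:ℝ)) ha0.le) hPnn]

include hF0 in
lemma PiFPA_zero (N : ℕ) (hN : 2 ≤ N) : PiFPA F N r 0 = 0 := by
  rw [PiFPA]
  have h1 : ∑ m ∈ Finset.Icc 1 (N-1),
      (N.choose m : ℝ) * (1 - F 0) ^ m * (F 0) ^ (N - m) * ubarb F r m 0 = 0 := by
    apply Finset.sum_eq_zero
    intro m hm
    obtain ⟨hm1, hm2⟩ := Finset.mem_Icc.1 hm
    rw [hF0]
    rw [zero_pow (by omega : N - m ≠ 0)]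
    ring
  rw [h1, hF0, zero_pow (by omega : N ≠ 0)]
  ring

include hFm hF0 hF1 hr0 hr1 in
lemma PiFPA_r_neg (N : ℕ) (hN : 2 ≤ N) : PiFPA F N r r < 0 := by
  have hr01 : r ∈ Icc (0:ℝ) 1 := ⟨hr0.le, hr1⟩
  have ht0 : 0 < F r := F_pos hFm hF0 hr01 hr0
  have ht1 : F r ≤ 1 := F_le_one hFm hF1 hr01
  have hpfpa : pFPA F N r r = r := by
    rw [pFPA, intervalIntegral.integral_same]
    have : ∑ m ∈ Finset.range (N - 1),
        ((N - 1).choose m : ℝ) * (1 - F r) ^ m * (F r) ^ (N - 1 - m) *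
          (ubarb F r (m + 1) r - r) = 0 := by
      apply Finset.sum_eq_zero
      intro m _
      rw [ubarb_r]
      ring
    rw [this]
    ring
  rw [PiFPA, hpfpa]
  have h1 : ∀ m ∈ Finset.Icc 1 (N-1),
      (N.choose m : ℝ) * (1 - F r) ^ m * (F r) ^ (N - m) * ubarb F r m r
      = ((N.choose m : ℝ) * (F r) ^ (N - m) * (1 - F r) ^ m) * r := by
    intro m _
    rw [ubarb_r]
    ring
  rw [Finset.sum_congr rfl h1, ← Finset.sum_mul]
  have hb := binom_sum (a := F r) (b := 1 - F r) (by ring) N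
  have hs := sum_split (by omega : 1 ≤ N)
    (fun m => (N.choose m : ℝ) * (F r) ^ (N - m) * (1 - F r) ^ m)
  rw [hb] at hs
  simp only [Nat.choose_zero_right, Nat.cast_one, pow_zero, Nat.sub_zero, one_mul, mul_one] at hs
  have hIcc : ∑ m ∈ Finset.Icc 1 (N-1),
      (N.choose m : ℝ) * (F r) ^ (N - m) * (1 - F r) ^ m
      = 1 - (1 - F r)^N - (F r)^N := by linarith
  rw [hIcc]
  have hbern := bern_strict ht0 ht1 N hN
  nlinarith
end Aux4

section Aux5
variable {F : ℝ → ℝ} {r : ℝ}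
  (hFc : ContinuousOn F (Icc 0 1)) (hFm : StrictMonoOn F (Icc 0 1))
  (hF0 : F 0 = 0) (hF1 : F 1 = 1) (hr0 : 0 < r) (hr1 : r ≤ 1)

set_option maxHeartbeats 1000000 in
include hFc hFm hF0 hF1 hr0 hr1 in
lemma PiSPA_pos (N : ℕ) (hN : 2 ≤ N) :
    ∃ v, (v ∈ Ioo (0:ℝ) r) ∧ 0 < PiSPA F N r v := by
  obtain ⟨K, hK⟩ : ∃ K, N = K + 2 := ⟨N - 2, by omega⟩
  subst hK
  set β : ℝ := (1 - F (r/2)) ^ K with hβdef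
  have hr2 : r/2 ∈ Icc (0:ℝ) 1 := ⟨by linarith, by linarith⟩
  have hFr2 : F (r/2) < 1 := F_lt_one hFm hF1 hr2 (by linarith)
  have hβ : 0 < β := pow_pos (by linarith) K
  have hβ1 : β ≤ 1 := pow_le_one₀ (by linarith) (by linarith [F_nonneg hFm hF0 hr2])
  set v : ℝ := min (r/4) (β * r / 8) with hvdef
  have hv0 : 0 < v := lt_min (by linarith) (by positivity)
  have hv4 : v ≤ r/4 := min_le_left _ _
  have hv8 : v ≤ β * r / 8 := min_le_right _ _
  have hvr : v < r := by
    calc v ≤ r/4 := hv4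
      _ < r := by linarith
  have hv : v ∈ Icc (0:ℝ) r := ⟨hv0.le, hvr.le⟩
  have hv01 : v ∈ Icc (0:ℝ) 1 := mem01 hr1 hv
  have ha0 : 0 < F v := F_pos hFm hF0 hv01 hv0
  have ha1 : F v ≤ 1 := F_le_one hFm hF1 hv01
  refine ⟨v, ⟨hv0, hvr⟩, ?_⟩
  rw [PiSPA_closed hFm hF1 hr1 (K+2) hv]
  set a : ℝ := F v with hadef
  set C2 : ℝ := ((K+2).choose 2 : ℝ) with hC2
  have hC2pos : 0 < C2 := by
    rw [hC2]
    exact_mod_cast Nat.choose_pos (by omega : 2 ≤ K + 2)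
  -- piece 1
  have hp1 : v * (1 - (1 - a) ^ (K+2)) - (K+2 : ℕ) * a * v ≥ -(C2 * a^2 * v) := by
    have hb := pow_one_sub_le ha0.le ha1 (K+2)
    rw [← hC2] at hb
    push_cast at hb ⊢
    nlinarith [mul_le_mul_of_nonneg_left hb hv0.le]
  -- piece 2 : sum bound
  have hφnn : ∀ m : ℕ, 0 ≤ ∫ x in v..r, (1 - F x) ^ m :=
    fun m => phi_nonneg hFm hF1 hr1 m hv
  have hp2 : ∑ m ∈ Finset.range (K+2),
      ((K+2).choose m : ℝ) * a ^ (K + 2 - m) * ∫ x in v..r, (1 - F x) ^ m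
      ≥ (K+2 : ℕ) * a * (∫ x in v..r, (1 - F x) ^ (K+1))
        + C2 * a^2 * ∫ x in v..r, (1 - F x) ^ K := by
    rw [Finset.sum_range_succ, Finset.sum_range_succ]
    have hch1 : (((K+2).choose (K+1) : ℕ) : ℝ) = (K+2 : ℝ) := by
      rw [Nat.choose_succ_self_right]
      push_cast; ring
    have hch2 : (((K+2).choose K : ℕ) : ℝ) = C2 := by
      rw [hC2]
      have h22 : K + 2 - 2 = K := by omega
      have hsym := Nat.choose_symm (by omega : 2 ≤ K + 2)
      rw [h22] at hsym
      rw [hsym]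
    have hsum0 : 0 ≤ ∑ m ∈ Finset.range K,
        ((K+2).choose m : ℝ) * a ^ (K + 2 - m) * ∫ x in v..r, (1 - F x) ^ m := by
      apply Finset.sum_nonneg
      intro m _
      exact mul_nonneg (mul_nonneg (by positivity) (by positivity)) (hφnn m)
    have he1 : (K + 2) - (K+1) = 1 := by omega
    have he2 : (K + 2) - K = 2 := by omega
    rw [he1, he2, hch1, hch2]
    push_cast
    nlinarith
  -- piece 3 : phi_K lower bound
  have hp3 : (∫ x in v..r, (1 - F x) ^ K) ≥ (r/2 - v) * β := by
    have hmemv : v ∈ Icc (0:ℝ) r := hv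
    have hmem2 : r/2 ∈ Icc (0:ℝ) r := ⟨by linarith, by linarith⟩
    have hmemr : r ∈ Icc (0:ℝ) r := right_mem_Icc.2 hr0.le
    have hadd := intervalIntegral.integral_add_adjacent_intervals
      (hInt hFc hr1 K hmemv hmem2) (hInt hFc hr1 K hmem2 hmemr)
    have h2 : 0 ≤ ∫ x in (r/2)..r, (1 - F x) ^ K := by
      apply intervalIntegral.integral_nonneg (by linarith)
      intro u hu
      have : F u ≤ 1 := F_le_one hFm hF1 ⟨by linarith [hu.1], by linarith [hu.2]⟩
      exact pow_nonneg (by linarith) K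
    have h1 : (r/2 - v) * β ≤ ∫ x in v..(r/2), (1 - F x) ^ K := by
      have hconst : ∫ _x in v..(r/2), β = (r/2 - v) * β := by
        rw [intervalIntegral.integral_const, smul_eq_mul]
      rw [← hconst]
      apply intervalIntegral.integral_mono_on (by linarith) intervalIntegrable_const
        (hInt hFc hr1 K hmemv hmem2)
      intro x hx
      have hx01 : x ∈ Icc (0:ℝ) 1 := ⟨by linarith [hx.1], by linarith [hx.2]⟩
      have hmono : F x ≤ F (r/2) := hFm.monotoneOn hx01 hr2 hx.2
      exact pow_le_pow_left₀ (by linarith) (by linarith) K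
    linarith
  have hfin : (r/2 - v) * β - v ≥ β * r / 8 := by
    have h1 : r/2 - v ≥ r/4 := by linarith
    have h2 : (r/2 - v) * β ≥ (r/4) * β := by nlinarith
    nlinarith
  have hφK := hφnn K
  have hP21 : (∫ x in v..r, (1 - F x) ^ (K + 2 - 1)) = ∫ x in v..r, (1 - F x) ^ (K + 1) := by
    norm_num
  rw [hP21]
  nlinarith [mul_pos (mul_pos hC2pos (mul_pos ha0 ha0)) (by positivity : (0:ℝ) < β * r / 8),
    mul_le_mul_of_nonneg_left hfin.le (by positivity : (0:ℝ) ≤ C2 * a^2),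
    mul_le_mul_of_nonneg_left hp3.le (by positivity : (0:ℝ) ≤ C2 * a^2)]
end Aux5

section Aux6
variable {F : ℝ → ℝ} {r : ℝ}
  (hFc : ContinuousOn F (Icc 0 1)) (hFm : StrictMonoOn F (Icc 0 1))
  (hF0 : F 0 = 0) (hF1 : F 1 = 1) (hr0 : 0 < r) (hr1 : r ≤ 1)

include hFc hFm hF1 hr0 hr1 in
lemma PiSPA_cont (N : ℕ) : ContinuousOn (PiSPA F N r) (Icc 0 r) := by
  have hFr : ContinuousOn F (Icc 0 r) := hFc.mono (Icc_subset_Icc le_rfl hr1)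
  have hcont : ContinuousOn (fun v => v * (1 - (1 - F v) ^ N) - N * F v * v
      + (∑ m ∈ Finset.range N, (N.choose m : ℝ) * (F v) ^ (N - m) * ∫ x in v..r, (1 - F x) ^ m)
      - N * F v * (v - v + ∫ x in v..r, (1 - F x) ^ (N - 1))) (Icc 0 r) := by
    apply ContinuousOn.sub
    apply ContinuousOn.add
    apply ContinuousOn.sub
    · exact continuousOn_id.mul (continuousOn_const.sub ((continuousOn_const.sub hFr).pow N))
    · exact (continuousOn_const.mul hFr).mul continuousOn_id
    · apply continuousOn_finset_sum
      intro m _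
      exact (continuousOn_const.mul (hFr.pow (N - m))).mul (phi_cont hFc hr0 hr1 m)
    · exact (continuousOn_const.mul hFr).mul
        ((continuousOn_id.sub continuousOn_id).add (phi_cont hFc hr0 hr1 (N - 1)))
  exact ContinuousOn.congr hcont (fun v hv => PiSPA_closed hFm hF1 hr1 N hv)

include hFc hFm hF1 hr0 hr1 in
lemma pFPA_cont (N : ℕ) : ContinuousOn (pFPA F N r) (Icc 0 r) := by
  have hFr : ContinuousOn F (Icc 0 r) := hFc.mono (Icc_subset_Icc le_rfl hr1)
  apply ContinuousOn.add
  apply ContinuousOn.add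
  · exact continuousOn_id
  · exact phi_cont hFc hr0 hr1 (N - 1)
  · apply continuousOn_finset_sum
    intro m _
    exact ((continuousOn_const.mul ((continuousOn_const.sub hFr).pow m)).mul
      (hFr.pow (N - 1 - m))).mul
      ((ubarb_cont hFc hFm hF1 hr0 hr1 (m + 1)).sub continuousOn_id)

include hFc hFm hF1 hr0 hr1 in
lemma PiFPA_cont (N : ℕ) : ContinuousOn (PiFPA F N r) (Icc 0 r) := by
  have hFr : ContinuousOn F (Icc 0 r) := hFc.mono (Icc_subset_Icc le_rfl hr1)
  have hcont : ContinuousOn (fun v =>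
      (∑ m ∈ Finset.Icc 1 (N - 1), (N.choose m : ℝ) * (F v) ^ (N - m)
        * sSup ((fun b => b * (1 - F b) ^ m) '' Icc v r))
      + (F v) ^ N * r - N * F v * pFPA F N r v) (Icc 0 r) := by
    apply ContinuousOn.sub
    apply ContinuousOn.add
    · apply continuousOn_finset_sum
      intro m _
      exact (continuousOn_const.mul (hFr.pow (N - m))).mul (S_cont hFc hr0 hr1 m)
    · exact (hFr.pow N).mul continuousOn_const
    · exact (continuousOn_const.mul hFr).mul (pFPA_cont hFc hFm hF1 hr0 hr1 N)
  apply ContinuousOn.congr hcont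
  intro v hv
  rw [PiFPA]
  congr 1
  congr 1
  apply Finset.sum_congr rfl
  intro m _
  rw [← hmul_ubarb hFc hFm hF1 hr1 m hv]
  ring
end Aux6

/-- Speculation is strictly more profitable in second-price auctions than in
first-price auctions. -/
theorem speculation_more_profitable_in_SPA
    (F f : ℝ → ℝ) (N : ℕ) (hN : 2 ≤ N)
    (hderiv : ∀ x ∈ Icc (0 : ℝ) 1, HasDerivAt F (f x) x)
    (hfc : ContinuousOn f (Icc 0 1))
    (hfpos : ∀ x ∈ Ioo (0 : ℝ) 1, 0 < f x)
    (hF0 : F 0 = 0) (hF1 : F 1 = 1)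
    (r : ℝ) (hr : r ∈ Ioc (0 : ℝ) 1) :
    ContinuousOn (PiSPA F N r) (Icc 0 r) ∧
    ContinuousOn (PiFPA F N r) (Icc 0 r) ∧
    ∃ v₁ ∈ Icc (0 : ℝ) r, ∃ v₂ ∈ Icc (0 : ℝ) r,
      (∀ v ∈ Icc (0 : ℝ) r, PiSPA F N r v ≤ PiSPA F N r v₁) ∧
      (∀ v ∈ Icc (0 : ℝ) r, PiFPA F N r v ≤ PiFPA F N r v₂) ∧
      PiFPA F N r v₂ < PiSPA F N r v₁ := by
  obtain ⟨hr0, hr1⟩ := hr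
  have hFc : ContinuousOn F (Icc 0 1) :=
    fun x hx => ((hderiv x hx).continuousAt).continuousWithinAt
  have hFm : StrictMonoOn F (Icc 0 1) := by
    apply strictMonoOn_of_deriv_pos (convex_Icc 0 1) hFc
    intro x hx
    rw [interior_Icc] at hx
    rw [(hderiv x ⟨hx.1.le, hx.2.le⟩).deriv]
    exact hfpos x hx
  have contS := PiSPA_cont hFc hFm hF1 hr0 hr1 N
  have contF := PiFPA_cont hFc hFm hF1 hr0 hr1 N
  refine ⟨contS, contF, ?_⟩
  have hne : (Icc (0:ℝ) r).Nonempty := nonempty_Icc.2 hr0.le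
  obtain ⟨v₁, hv₁, hmax₁⟩ := isCompact_Icc.exists_isMaxOn hne contS
  obtain ⟨v₂, hv₂, hmax₂⟩ := isCompact_Icc.exists_isMaxOn hne contF
  refine ⟨v₁, hv₁, v₂, hv₂, fun v hv => hmax₁ hv, fun v hv => hmax₂ hv, ?_⟩
  obtain ⟨v₀, hv₀, hpos⟩ := PiSPA_pos hFc hFm hF0 hF1 hr0 hr1 N hN
  have hle₀ : PiSPA F N r v₀ ≤ PiSPA F N r v₁ := hmax₁ ⟨hv₀.1.le, hv₀.2.le⟩
  rcases le_or_gt (PiFPA F N r v₂) 0 with hc | hc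
  · linarith
  · have hv₂0 : 0 < v₂ := by
      rcases eq_or_lt_of_le hv₂.1 with h | h
      · exfalso
        rw [← h] at hc
        rw [PiFPA_zero hF0 N hN] at hc
        exact lt_irrefl 0 hc
      · exact h
    have hv₂r : v₂ < r := by
      rcases eq_or_lt_of_le hv₂.2 with h | h
      · exfalso
        rw [h] at hc
        linarith [PiFPA_r_neg hFm hF0 hF1 hr0 hr1 N hN]
      · exact h
    have hlt := PiFPA_lt_PiSPA hFc hFm hF0 hF1 hr0 hr1 N hN hv₂0 hv₂r
    have : PiSPA F N r v₂ ≤ PiSPA F N r v₁ := hmax₁ hv₂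
    linarith
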